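/- Local boundary characterization of continuous invariants: Let f be a polynomial vector field on ℝⁿ whose solutions exist and are unique on [0, ∞), and let p, h ∈ ℝ[x1, …, xn] be polynomials. Then P = {x ∈ ℝⁿ : p(x) ≥ 0} is a continuous invariant of (D, f) with D = {x ∈ ℝⁿ : h(x) > 0} if and only if for every x0 ∈ ℝⁿ with p(x0) = 0 and h(x0) > 0, the solution x(t) of ẋ = f(x) with x(0) = x0 satisfies: there exists ε > 0 such that p(x(t)) ≥ 0 for all t ∈ [0, ε]. -/

import Mathlib

open MvPolynomial Set

/-- Lie derivatives of a polynomial `p` along the polynomial vector field `f`. -/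
noncomputable def lieDeriv {n : ℕ} (f : Fin n → MvPolynomial (Fin n) ℝ)
    (p : MvPolynomial (Fin n) ℝ) : ℕ → MvPolynomial (Fin n) ℝ
  | 0 => p
  | k + 1 => ∑ i, (pderiv i (lieDeriv f p k)) * f i

/-- Evaluation of a polynomial vector field at a point of ℝⁿ. -/
noncomputable def evalVF {n : ℕ} (f : Fin n → MvPolynomial (Fin n) ℝ)
    (x : Fin n → ℝ) : Fin n → ℝ := fun i => eval x (f i)

/-- `x : ℝ → ℝⁿ` is a solution of `ẋ = F(x)` on `[0, ∞)`. -/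
def IsSolutionOn {n : ℕ} (F : (Fin n → ℝ) → (Fin n → ℝ)) (x : ℝ → (Fin n → ℝ)) : Prop :=
  ∀ t ∈ Ici (0:ℝ), HasDerivWithinAt x (F (x t)) (Ici 0) t

/-- Solutions of `ẋ = F(x)` exist and are unique on `[0, ∞)` for every initial condition. -/
def CompleteFlow {n : ℕ} (F : (Fin n → ℝ) → (Fin n → ℝ)) : Prop :=
  (∀ x0 : Fin n → ℝ, ∃ x : ℝ → (Fin n → ℝ), x 0 = x0 ∧ IsSolutionOn F x) ∧
  (∀ x y : ℝ → (Fin n → ℝ), IsSolutionOn F x → IsSolutionOn F y → x 0 = y 0 →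
    ∀ t ∈ Ici (0:ℝ), x t = y t)

/-- `P` is a continuous invariant of `(D, F)`. -/
def IsCI {n : ℕ} (D P : Set (Fin n → ℝ)) (F : (Fin n → ℝ) → (Fin n → ℝ)) : Prop :=
  ∀ x : ℝ → (Fin n → ℝ), IsSolutionOn F x → x 0 ∈ P ∩ D →
    ∀ T ≥ (0:ℝ), (∀ t ∈ Icc (0:ℝ) T, x t ∈ D) → ∀ t ∈ Icc (0:ℝ) T, x t ∈ P

lemma sol_continuousOn {n : ℕ} {F : (Fin n → ℝ) → (Fin n → ℝ)} {x : ℝ → (Fin n → ℝ)}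
    (hx : IsSolutionOn F x) : ContinuousOn x (Ici 0) :=
  fun t ht => (hx t ht).continuousWithinAt

lemma sol_shift {n : ℕ} {F : (Fin n → ℝ) → (Fin n → ℝ)} {x : ℝ → (Fin n → ℝ)}
    (hx : IsSolutionOn F x) {c : ℝ} (hc : 0 ≤ c) :
    IsSolutionOn F (fun s => x (c + s)) := by
  intro s hs
  simp only [mem_Ici] at hs
  have h1 : HasDerivWithinAt (fun s : ℝ => c + s) 1 (Ici 0) s :=
    ((hasDerivAt_id s).const_add c).hasDerivWithinAt
  have h2 : HasDerivWithinAt x (F (x (c + s))) (Ici 0) (c + s) :=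
    hx _ (by simp only [mem_Ici]; positivity)
  have hmaps : MapsTo (fun s : ℝ => c + s) (Ici 0) (Ici 0) := by
    intro u hu; simp only [mem_Ici] at *; positivity
  have := h2.scomp s h1 hmaps
  rw [one_smul] at this; exact this

/-- **Local boundary characterization of continuous invariants.** `{p ≥ 0}` is a
continuous invariant of `({h > 0}, f)` if and only if every solution starting at
a point of the boundary `p = 0` inside the domain `h > 0` satisfies `p ≥ 0` on
some small interval `[0, ε]`. -/
theorem ci_boundary_characterization {n : ℕ} (f : Fin n → MvPolynomial (Fin n) ℝ)
    (p h : MvPolynomial (Fin n) ℝ)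
    (hflow : CompleteFlow (evalVF f)) :
    IsCI {x | 0 < eval x h} {x | 0 ≤ eval x p} (evalVF f) ↔
    (∀ x : ℝ → (Fin n → ℝ), IsSolutionOn (evalVF f) x →
      eval (x 0) p = 0 → 0 < eval (x 0) h →
      ∃ ε > (0:ℝ), ∀ t ∈ Icc (0:ℝ) ε, 0 ≤ eval (x t) p) := by
  constructor
  · intro hCI x hx hp0 hh0
    have hcont : ContinuousWithinAt (fun t => eval (x t) h) (Ici 0) 0 :=
      (MvPolynomial.continuous_eval (p := h)).continuousAt.comp_continuousWithinAt
        ((sol_continuousOn hx) 0 self_mem_Ici)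
    have hev : {t : ℝ | 0 < eval (x t) h} ∈ nhdsWithin 0 (Ici 0) := by
      have := hcont.eventually_mem (s := Ioi (0:ℝ)) (isOpen_Ioi.mem_nhds hh0)
      exact this
    rw [mem_nhdsGE_iff_exists_Icc_subset] at hev
    obtain ⟨ε, hε, hsub⟩ := hev
    exact ⟨ε, hε, hCI x hx ⟨hp0.ge, hh0⟩ ε hε.le (fun t ht => hsub ht)⟩
  · intro hloc x hx hx0 T hT hD
    by_contra hcon
    push_neg at hcon
    obtain ⟨t1, ht1, hneg⟩ := hcon
    simp only [mem_setOf_eq, not_le] at hneg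
    set g : ℝ → ℝ := fun t => eval (x t) p with hg
    have hgcont : ContinuousOn g (Icc 0 T) :=
      ((MvPolynomial.continuous_eval (p := p)).comp_continuousOn
        (sol_continuousOn hx)).mono (fun t ht => ht.1)
    set S : Set ℝ := {t ∈ Icc 0 T | g t < 0} with hS
    have hSne : S.Nonempty := ⟨t1, ht1, hneg⟩
    have hSbdd : BddBelow S := ⟨0, fun t ht => ht.1.1⟩
    set t₀ := sInf S with ht₀
    have ht₀S : ∀ t ∈ S, t₀ ≤ t := fun t ht => csInf_le hSbdd ht
    have ht₀0 : 0 ≤ t₀ := le_csInf hSne (fun t ht => ht.1.1)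
    have ht₀T : t₀ ≤ T := (ht₀S t1 ⟨ht1, hneg⟩).trans ht1.2
    have hcl : t₀ ∈ closure S := csInf_mem_closure hSne hSbdd
    have hgle : g t₀ ≤ 0 := by
      have hC : IsClosed (Icc (0:ℝ) T ∩ g ⁻¹' Iic 0) :=
        hgcont.preimage_isClosed_of_isClosed isClosed_Icc isClosed_Iic
      have hsub : S ⊆ Icc (0:ℝ) T ∩ g ⁻¹' Iic 0 := fun t ht => ⟨ht.1, le_of_lt ht.2⟩
      exact (hC.closure_subset ((closure_mono hsub) hcl)).2
    have hgge : 0 ≤ g t₀ := by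
      rcases eq_or_lt_of_le ht₀0 with heq | hlt
      · simpa [hg, ← heq] using hx0.1
      · have hC : IsClosed (Icc (0:ℝ) T ∩ g ⁻¹' Ici 0) :=
          hgcont.preimage_isClosed_of_isClosed isClosed_Icc isClosed_Ici
        have hsub : Ico 0 t₀ ⊆ Icc (0:ℝ) T ∩ g ⁻¹' Ici 0 := by
          intro t ht
          refine ⟨⟨ht.1, ht.2.le.trans ht₀T⟩, ?_⟩
          by_contra hneg'
          simp only [mem_preimage, mem_Ici, not_le] at hneg'
          exact absurd (ht₀S t ⟨⟨ht.1, ht.2.le.trans ht₀T⟩, hneg'⟩) (not_le.2 ht.2)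
        have : t₀ ∈ closure (Ico 0 t₀) := by
          rw [closure_Ico hlt.ne]; exact ⟨ht₀0, le_refl _⟩
        exact (hC.closure_subset ((closure_mono hsub) this)).2
    have hg0 : g t₀ = 0 := le_antisymm hgle hgge
    have hy : IsSolutionOn (evalVF f) (fun s => x (t₀ + s)) := sol_shift hx ht₀0
    obtain ⟨ε, hε, hεp⟩ := hloc _ hy (by simpa using hg0) (by simpa using hD t₀ ⟨ht₀0, ht₀T⟩)
    obtain ⟨s, hsS, hs⟩ := exists_lt_of_csInf_lt hSne (lt_add_of_pos_right t₀ hε)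
    have h1 : 0 ≤ g s := by
      have := hεp (s - t₀) ⟨sub_nonneg.2 (ht₀S s hsS), by linarith⟩
      simpa [hg] using this
    exact absurd hsS.2 (not_lt.2 h1)
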